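/- For every family F of finite subsets of ℕ and every infinite set A ⊆ ℕ, there exists an infinite set B ⊆ A such that either no finite subset of B belongs to F, or every infinite subset C of B has an initial segment belonging to F. -/

import Mathlib

/-- `a` is an initial segment of `C`: `a ⊆ C` and `a` consists of the first `|a|`
elements of `C` in increasing order. -/
def IsInitSeg (a : Finset ℕ) (C : Set ℕ) : Prop :=
  ↑a ⊆ C ∧ ∀ x ∈ C, x ∉ a → ∀ y ∈ a, y < x

namespace GalvinAux

/-- `B` accepts `a` (w.r.t. the family `F`): every infinite subset `C` of `B` lying
entirely above `a` has an initial segment `c` with `a ∪ c ∈ F`. -/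
def Acc₀ (F : Set (Finset ℕ)) (a : Finset ℕ) (B : Set ℕ) : Prop :=
  ∀ C : Set ℕ, C ⊆ B → C.Infinite → (∀ x ∈ C, ∀ y ∈ a, y < x) →
    ∃ c : Finset ℕ, IsInitSeg c C ∧ a ∪ c ∈ F

/-- `B` rejects `a`: no infinite subset of `B` accepts `a`. -/
def Rej₀ (F : Set (Finset ℕ)) (a : Finset ℕ) (B : Set ℕ) : Prop :=
  ∀ C : Set ℕ, C ⊆ B → C.Infinite → ¬ Acc₀ F a C

theorem acc_mono {F : Set (Finset ℕ)} {a : Finset ℕ} {B B' : Set ℕ}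
    (h : B' ⊆ B) (ha : Acc₀ F a B) : Acc₀ F a B' :=
  fun C hC => ha C (hC.trans h)

theorem rej_mono {F : Set (Finset ℕ)} {a : Finset ℕ} {B B' : Set ℕ}
    (h : B' ⊆ B) (ha : Rej₀ F a B) : Rej₀ F a B' :=
  fun C hC => ha C (hC.trans h)

theorem acc_of_mem {F : Set (Finset ℕ)} {a : Finset ℕ} {B : Set ℕ}
    (h : a ∈ F) : Acc₀ F a B :=
  fun _C _ _ _ => ⟨∅, ⟨by simp, by simp⟩, by simpa using h⟩

theorem decide (F : Set (Finset ℕ)) (a : Finset ℕ) {B : Set ℕ} (hB : B.Infinite) :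
    ∃ C, C ⊆ B ∧ C.Infinite ∧ (Acc₀ F a C ∨ Rej₀ F a C) := by
  by_cases h : ∃ C, C ⊆ B ∧ C.Infinite ∧ Acc₀ F a C
  · obtain ⟨C, h1, h2, h3⟩ := h; exact ⟨C, h1, h2, Or.inl h3⟩
  · exact ⟨B, subset_rfl, hB, Or.inr fun C hC hCi hacc => h ⟨C, hC, hCi, hacc⟩⟩

theorem decide_many (F : Set (Finset ℕ)) (T : Finset (Finset ℕ)) :
    ∀ B : Set ℕ, B.Infinite → ∃ C, C ⊆ B ∧ C.Infinite ∧
      ∀ a ∈ T, Acc₀ F a C ∨ Rej₀ F a C := by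
  classical
  induction T using Finset.induction_on with
  | empty => exact fun B hB => ⟨B, subset_rfl, hB, by simp⟩
  | insert _ _ ha ih =>
    intro B hB
    obtain ⟨C, h1, h2, h3⟩ := ih B hB
    obtain ⟨D, g1, g2, g3⟩ := decide F _ h2
    refine ⟨D, g1.trans h1, g2, fun a' ha' => ?_⟩
    rcases Finset.mem_insert.1 ha' with rfl | hmem
    · exact g3
    · exact (h3 a' hmem).imp (acc_mono g1) (rej_mono g1)

/-- The key lemma of combinatorial forcing: if `B` rejects `a`, then there is no
infinite subset `B'` of `B` above `a` all of whose elements `b` are such that the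
part of `B` above `b` accepts `insert b a`. -/
theorem key (F : Set (Finset ℕ)) {a : Finset ℕ} {B B' : Set ℕ}
    (hrej : Rej₀ F a B) (hB' : B'.Infinite) (hsub : B' ⊆ B)
    (_habove : ∀ x ∈ B', ∀ y ∈ a, y < x)
    (hacc : ∀ b ∈ B', Acc₀ F (insert b a) {x ∈ B | b < x}) : False := by
  refine hrej B' hsub hB' ?_
  intro C hC hCi hCab
  have hne : C.Nonempty := hCi.nonempty
  set b := sInf C with hbdef
  have hbC : b ∈ C := Nat.sInf_mem hne
  have hble : ∀ x ∈ C, b ≤ x := fun x hx => Nat.sInf_le hx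
  have hCd : (C \ {b}).Infinite := hCi.diff (Set.finite_singleton b)
  have hblt : ∀ x ∈ C, x ≠ b → b < x := fun x hx hxb =>
    lt_of_le_of_ne (hble x hx) (Ne.symm hxb)
  have hsub' : C \ {b} ⊆ {x ∈ B | b < x} := by
    rintro x ⟨hx, hxb⟩
    exact ⟨hsub (hC hx), hblt x hx (by simpa using hxb)⟩
  have hab' : ∀ x ∈ C \ {b}, ∀ y ∈ insert b a, y < x := by
    rintro x ⟨hx, hxb⟩ y hy
    rcases Finset.mem_insert.1 hy with rfl | hy
    · exact hblt x hx (by simpa using hxb)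
    · exact hCab x hx y hy
  obtain ⟨c, hcseg, hcF⟩ := hacc b (hC hbC) (C \ {b}) hsub' hCd hab'
  refine ⟨insert b c, ⟨?_, ?_⟩, ?_⟩
  · intro x hx
    rcases Finset.mem_insert.1 (by exact_mod_cast hx) with rfl | hx'
    · exact hbC
    · exact (hcseg.1 (by exact_mod_cast hx')).1
  · intro x hxC hxn y hy
    have hxb : x ≠ b := fun h => hxn (by simp [h])
    have hxc : x ∉ c := fun h => hxn (Finset.mem_insert_of_mem h)
    have hx' : x ∈ C \ {b} := ⟨hxC, by simpa using hxb⟩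
    rcases Finset.mem_insert.1 hy with rfl | hy'
    · exact hblt x hxC hxb
    · exact hcseg.2 x hx' hxc y hy'
  · rw [Finset.union_insert, ← Finset.insert_union]
    exact hcF

/-- The fusion invariant. -/
def FInv (F : Set (Finset ℕ)) (A : Set ℕ) (p : Finset ℕ × Set ℕ) : Prop :=
  p.2 ⊆ A ∧ p.2.Infinite ∧ (∀ x ∈ p.2, ∀ y ∈ p.1, y < x) ∧
    ∀ a ∈ p.1.powerset, Acc₀ F a p.2 ∨ Rej₀ F a p.2

def FStep (p q : Finset ℕ × Set ℕ) : Prop :=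
  q.2 ⊆ p.2 ∧ ∃ b ∈ p.2, q.1 = insert b p.1 ∧ ∀ x ∈ q.2, b < x

theorem finv_step (F : Set (Finset ℕ)) (A : Set ℕ) {p : Finset ℕ × Set ℕ}
    (hp : FInv F A p) : ∃ q, FInv F A q ∧ FStep p q := by
  obtain ⟨hpA, hpinf, habove, _hdec⟩ := hp
  have hne : p.2.Nonempty := hpinf.nonempty
  set b := sInf p.2 with hbdef
  have hbB : b ∈ p.2 := Nat.sInf_mem hne
  have hB' : {x ∈ p.2 | b < x}.Infinite := by
    refine (hpinf.diff (Set.finite_le_nat b)).mono ?_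
    rintro x ⟨hx1, hx2⟩
    exact ⟨hx1, by simpa using (lt_of_not_ge (by simpa using hx2))⟩
  obtain ⟨C, h1, h2, h3⟩ := decide_many F (insert b p.1).powerset _ hB'
  have hCp : C ⊆ p.2 := h1.trans (fun x hx => hx.1)
  refine ⟨(insert b p.1, C), ⟨hCp.trans hpA, h2, ?_, h3⟩, hCp, b, hbB, rfl, ?_⟩
  · intro x hx y hy
    rcases Finset.mem_insert.1 hy with rfl | hy'
    · exact (h1 hx).2
    · exact habove x (hCp hx) y hy'
  · exact fun x hx => (h1 hx).2

/-- Generic chain construction by choice. -/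
noncomputable def iterChain {α : Type*} (P : α → Prop) (R : α → α → Prop)
    (init : {x : α // P x}) (step : ∀ x, P x → ∃ y, P y ∧ R x y) : ℕ → {x : α // P x}
  | 0 => init
  | n + 1 => ⟨(step _ (iterChain P R init step n).2).choose,
      (step _ (iterChain P R init step n).2).choose_spec.1⟩

theorem iterChain_succ {α : Type*} (P : α → Prop) (R : α → α → Prop)
    (init : {x : α // P x}) (step : ∀ x, P x → ∃ y, P y ∧ R x y) (n : ℕ) :
    R (iterChain P R init step n).1 (iterChain P R init step (n + 1)).1 :=
  (step _ (iterChain P R init step n).2).choose_spec.2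

theorem exists_chain {α : Type*} (P : α → Prop) (R : α → α → Prop) (x0 : α) (h0 : P x0)
    (step : ∀ x, P x → ∃ y, P y ∧ R x y) :
    ∃ f : ℕ → α, f 0 = x0 ∧ (∀ n, P (f n)) ∧ ∀ n, R (f n) (f (n + 1)) :=
  ⟨fun n => (iterChain P R ⟨x0, h0⟩ step n).1, rfl,
    fun n => (iterChain P R ⟨x0, h0⟩ step n).2,
    fun n => iterChain_succ P R ⟨x0, h0⟩ step n⟩

theorem exists_subset_of_finset_subset_iUnion (s : ℕ → Finset ℕ)
    (hmono : ∀ n, s n ⊆ s (n + 1)) (a : Finset ℕ)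
    (h : ↑a ⊆ ⋃ n, (↑(s n) : Set ℕ)) : ∃ n, a ⊆ s n := by
  classical
  have hmono' : Monotone s := monotone_nat_of_le_succ hmono
  induction a using Finset.induction_on with
  | empty => exact ⟨0, by simp⟩
  | @insert x a hx ih =>
    obtain ⟨n, hn⟩ := ih ((Set.subset_insert _ _).trans (by simpa using h))
    have hxM : (x : ℕ) ∈ ⋃ n, (↑(s n) : Set ℕ) := h (by simp)
    obtain ⟨m, hm⟩ := Set.mem_iUnion.1 hxM
    refine ⟨max n m, Finset.insert_subset (hmono' (le_max_right n m) hm)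
      (hn.trans (hmono' (le_max_left n m)))⟩

theorem infinite_iUnion_of_card (s : ℕ → Finset ℕ)
    (hcard : ∀ n, n ≤ (s n).card) : (⋃ n, (↑(s n) : Set ℕ)).Infinite := by
  intro hf
  have hsub : ∀ n, s n ⊆ hf.toFinset := by
    intro n x hx
    rw [Set.Finite.mem_toFinset]
    exact Set.mem_iUnion.2 ⟨n, hx⟩
  have := Finset.card_le_card (hsub (hf.toFinset.card + 1))
  have h2 := hcard (hf.toFinset.card + 1)
  omega

end GalvinAux

open GalvinAux

/-- Relativized (localized) Galvin's lemma. -/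
theorem galvin_lemma_relativized (F : Set (Finset ℕ)) (A : Set ℕ) (hA : A.Infinite) :
    ∃ B : Set ℕ, B ⊆ A ∧ B.Infinite ∧
      ((∀ a : Finset ℕ, ↑a ⊆ B → a ∉ F) ∨
        (∀ C : Set ℕ, C ⊆ B → C.Infinite → ∃ a ∈ F, IsInitSeg a C)) := by
  classical
  -- Initial set deciding ∅.
  obtain ⟨B0, hB0A, hB0inf, hB0dec⟩ := decide F ∅ hA
  have hinit : FInv F A (∅, B0) := by
    refine ⟨hB0A, hB0inf, by simp, ?_⟩
    intro a ha
    rw [Finset.mem_powerset, Finset.subset_empty] at ha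
    subst ha
    exact hB0dec
  -- Fusion sequence.
  obtain ⟨ch, hch0, hinv, hstep⟩ :=
    exists_chain (FInv F A) FStep (∅, B0) hinit (fun _p hp => finv_step F A hp)
  set s : ℕ → Finset ℕ := fun n => (ch n).1 with hsdef
  set Bn : ℕ → Set ℕ := fun n => (ch n).2 with hBndef
  have hs0 : s 0 = ∅ := by rw [hsdef]; simp [hch0]
  have hBA : ∀ n, Bn n ⊆ A := fun n => (hinv n).1
  have hBinf : ∀ n, (Bn n).Infinite := fun n => (hinv n).2.1
  have habove : ∀ n, ∀ x ∈ Bn n, ∀ y ∈ s n, y < x := fun n => (hinv n).2.2.1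
  have hdec : ∀ n, ∀ a ∈ (s n).powerset, Acc₀ F a (Bn n) ∨ Rej₀ F a (Bn n) :=
    fun n => (hinv n).2.2.2
  have hBsucc : ∀ n, Bn (n + 1) ⊆ Bn n := fun n => (hstep n).1
  have hstep2 : ∀ n, ∃ b ∈ Bn n, s (n + 1) = insert b (s n) ∧ ∀ x ∈ Bn (n + 1), b < x :=
    fun n => (hstep n).2
  have hBanti : ∀ {n m : ℕ}, n ≤ m → Bn m ⊆ Bn n := by
    intro n m h
    induction h with
    | refl => exact subset_rfl
    | step _h ih => exact (hBsucc _).trans ih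
  have hsmono : ∀ {n m : ℕ}, n ≤ m → s n ⊆ s m := by
    intro n m h
    induction h with
    | refl => exact Finset.Subset.refl _
    | step _h ih =>
      obtain ⟨b, _, he, _⟩ := hstep2 _
      rw [he]
      exact ih.trans (Finset.subset_insert _ _)
  set M : Set ℕ := ⋃ n, (↑(s n) : Set ℕ) with hMdef
  have hsB : ∀ n m, n ≤ m → (↑(s m) : Set ℕ) ⊆ ↑(s n) ∪ Bn n := by
    intro n m h
    induction h with
    | refl => exact Set.subset_union_left
    | @step m' h' ih =>
      obtain ⟨b, hb, he, _⟩ := hstep2 m'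
      rw [he, Finset.coe_insert]
      exact Set.insert_subset_iff.2 ⟨Or.inr (hBanti h' hb), ih⟩
  have hMA : M ⊆ A := by
    refine Set.iUnion_subset fun n => ?_
    refine (hsB 0 n (Nat.zero_le n)).trans ?_
    rw [hs0, Finset.coe_empty, Set.empty_union]
    exact hBA 0
  have hbnot : ∀ n, ∀ b ∈ Bn n, b ∉ s n :=
    fun n b hb hbs => lt_irrefl b (habove n b hb b hbs)
  have hcard : ∀ n, (s n).card = n := by
    intro n
    induction n with
    | zero => simp [hs0]
    | succ n ih =>
      obtain ⟨b, hb, he, _⟩ := hstep2 n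
      rw [he, Finset.card_insert_of_notMem (hbnot n b hb), ih]
  have hMinf : M.Infinite := infinite_iUnion_of_card s fun n => (hcard n).ge
  have hclaimT : ∀ n, {x ∈ M | ∀ y ∈ s n, y < x} ⊆ Bn n := by
    rintro n x ⟨hxM, hxab⟩
    obtain ⟨m, hm⟩ := Set.mem_iUnion.1 hxM
    rcases le_total m n with h | h
    · exact absurd (hxab x (hsmono h (Finset.mem_coe.1 hm))) (lt_irrefl x)
    · rcases hsB n m h hm with hx | hx
      · exact absurd (hxab x (Finset.mem_coe.1 hx)) (lt_irrefl x)
      · exact hx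
  have hexn : ∀ a : Finset ℕ, ↑a ⊆ M → ∃ n, a ⊆ s n := fun a ha =>
    exists_subset_of_finset_subset_iUnion s (fun n => hsmono (Nat.le_succ n)) a ha
  -- The fused set `M` decides every finite subset of itself
  -- (relative to the part of `M` above that subset).
  have hdecM : ∀ a : Finset ℕ, ↑a ⊆ M →
      Acc₀ F a {x ∈ M | ∀ y ∈ a, y < x} ∨ Rej₀ F a {x ∈ M | ∀ y ∈ a, y < x} := by
    intro a haM
    have hex := hexn a haM
    have hfind : a ⊆ s (Nat.find hex) := Nat.find_spec hex
    have key2 : ∀ y ∈ s (Nat.find hex), ∀ x : ℕ, (∀ z ∈ a, z < x) → y < x := by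
      intro y hy x hx
      rcases hn : Nat.find hex with _ | k
      · rw [hn, hs0] at hy; simp at hy
      · rw [hn] at hy hfind
        have hnot : ¬ a ⊆ s k := Nat.find_min hex (by omega)
        obtain ⟨b, hbB, hseq, _⟩ := hstep2 k
        have hba : b ∈ a := by
          by_contra hba
          refine hnot fun z hz => ?_
          rcases Finset.mem_insert.1 (by rw [← hseq]; exact hfind hz) with rfl | h
          · exact absurd hz hba
          · exact h
        rw [hseq] at hy
        rcases Finset.mem_insert.1 hy with rfl | hy'
        · exact hx y hba
        · exact lt_trans (habove k b hbB y hy') (hx b hba)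
    have hTsub : {x ∈ M | ∀ y ∈ a, y < x} ⊆ Bn (Nat.find hex) := by
      rintro x ⟨hxM, hxa⟩
      exact hclaimT _ ⟨hxM, fun y hy => key2 y hy x hxa⟩
    exact (hdec _ a (Finset.mem_powerset.2 hfind)).imp (acc_mono hTsub) (rej_mono hTsub)
  have hTinf : ∀ a : Finset ℕ, {x ∈ M | ∀ y ∈ a, y < x}.Infinite := by
    intro a
    refine (hMinf.diff (Set.finite_le_nat (a.sup id))).mono ?_
    rintro x ⟨hxM, hx⟩
    exact ⟨hxM, fun y hy => lt_of_le_of_lt (Finset.le_sup (f := id) hy)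
      (lt_of_not_ge (by simpa using hx))⟩
  rcases hdecM ∅ (by simp) with haccE | hrejE
  -- Case 1: `M` accepts `∅`; every infinite subset has an initial segment in `F`.
  · refine ⟨{x ∈ M | ∀ y ∈ (∅ : Finset ℕ), y < x}, fun x hx => hMA hx.1, hTinf ∅, Or.inr ?_⟩
    intro C hC hCi
    obtain ⟨c, hcseg, hcF⟩ := haccE C hC hCi (by simp)
    exact ⟨c, by simpa using hcF, hcseg⟩
  -- Case 2: `M` rejects `∅`; thin out to a set no finite subset of which is in `F`.
  · set P : Finset ℕ → Prop := fun t => ↑t ⊆ M ∧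
      ∀ a ∈ t.powerset, Rej₀ F a {x ∈ M | ∀ y ∈ a, y < x} with hPdef
    have hP0 : P ∅ := by
      refine ⟨by simp, ?_⟩
      intro a ha
      rw [Finset.mem_powerset, Finset.subset_empty] at ha
      subst ha
      exact hrejE
    have hPstep : ∀ t, P t → ∃ t', P t' ∧ ∃ b, (∀ y ∈ t, y < b) ∧ t' = insert b t := by
      intro t ht
      obtain ⟨htM, htrej⟩ := ht
      have hbadfin : ∀ a' ∈ t.powerset,
          {b ∈ M | (∀ y ∈ t, y < b) ∧ Acc₀ F (insert b a') {x ∈ M | b < x}}.Finite := by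
        intro a' ha'
        rw [Finset.mem_powerset] at ha'
        by_contra hinf
        refine key F (htrej a' (Finset.mem_powerset.2 ha')) hinf ?_ ?_ ?_
        · rintro b ⟨hbM, hbt, -⟩
          exact ⟨hbM, fun y hy => hbt y (ha' hy)⟩
        · rintro b ⟨_hbM, hbt, -⟩ y hy
          exact hbt y (ha' hy)
        · rintro b ⟨_hbM, _hbt, hbacc⟩
          refine acc_mono ?_ hbacc
          rintro x ⟨⟨hxM, _hxa⟩, hbx⟩
          exact ⟨hxM, hbx⟩
      have hbig : (⋃ a' ∈ (↑t.powerset : Set (Finset ℕ)),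
          {b ∈ M | (∀ y ∈ t, y < b) ∧ Acc₀ F (insert b a') {x ∈ M | b < x}}).Finite := by
        refine Set.Finite.biUnion (t.powerset.finite_toSet) ?_
        intro a' ha'
        exact hbadfin a' (by simpa using ha')
      obtain ⟨b, hbM, hbnot⟩ :=
        (hMinf.diff (hbig.union (Set.finite_le_nat (t.sup id)))).nonempty
      rw [Set.mem_union] at hbnot
      push_neg at hbnot
      obtain ⟨hbnbig, hble⟩ := hbnot
      have hbt : ∀ y ∈ t, y < b := fun y hy =>
        lt_of_le_of_lt (Finset.le_sup (f := id) hy) (lt_of_not_ge (by simpa using hble))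
      refine ⟨insert b t, ⟨?_, ?_⟩, b, hbt, rfl⟩
      · rw [Finset.coe_insert]
        exact Set.insert_subset_iff.2 ⟨hbM, htM⟩
      · intro a ha
        rw [Finset.mem_powerset] at ha
        by_cases hba : b ∈ a
        · have ha' : a.erase b ⊆ t := by
            intro x hx
            obtain ⟨hxb, hxa⟩ := Finset.mem_erase.1 hx
            exact (Finset.mem_insert.1 (ha hxa)).resolve_left hxb
          have haM : ↑a ⊆ M := by
            refine subset_trans ?_ (Set.insert_subset_iff.2 ⟨hbM, htM⟩)
            rw [← Finset.coe_insert]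
            exact_mod_cast ha
          rcases hdecM a haM with hacc2 | hrej2
          · exfalso
            apply hbnbig
            refine Set.mem_biUnion (show (a.erase b) ∈ (↑t.powerset : Set (Finset ℕ)) from
              Finset.mem_coe.2 (Finset.mem_powerset.2 ha')) ?_
            refine ⟨hbM, hbt, ?_⟩
            have hae : insert b (a.erase b) = a := Finset.insert_erase hba
            rw [hae]
            refine acc_mono ?_ hacc2
            rintro x ⟨hxM, hbx⟩
            refine ⟨hxM, fun y hy => ?_⟩
            by_cases hyb : y = b
            · exact hyb ▸ hbx
            · exact lt_trans (hbt y (ha' (Finset.mem_erase.2 ⟨hyb, hy⟩))) hbx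
          · exact hrej2
        · exact htrej a (Finset.mem_powerset.2 fun x hx =>
            (Finset.mem_insert.1 (ha hx)).resolve_left fun h => hba (h ▸ hx))
    obtain ⟨u, _hu0, huP, hustep⟩ :=
      exists_chain P (fun t t' => ∃ b, (∀ y ∈ t, y < b) ∧ t' = insert b t) ∅ hP0 hPstep
    have humono : ∀ n, u n ⊆ u (n + 1) := by
      intro n
      obtain ⟨b, _, he⟩ := hustep n
      rw [he]
      exact Finset.subset_insert _ _
    have hucard : ∀ n, n ≤ (u n).card := by
      intro n
      induction n with
      | zero => omega
      | succ n ih =>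
        obtain ⟨b, hb, he⟩ := hustep n
        have hbn : b ∉ u n := fun h => lt_irrefl b (hb b h)
        rw [he, Finset.card_insert_of_notMem hbn]
        omega
    refine ⟨⋃ n, (↑(u n) : Set ℕ), ?_, infinite_iUnion_of_card _ hucard, Or.inl ?_⟩
    · exact Set.iUnion_subset fun n => ((huP n).1).trans hMA
    · intro a haB haF
      obtain ⟨n, hn⟩ := exists_subset_of_finset_subset_iUnion _ humono a haB
      exact (huP n).2 a (Finset.mem_powerset.2 hn) _ subset_rfl (hTinf a) (acc_of_mem haF)
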